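/- Let f : ℝⁿ → ℝ be differentiable with strongly pseudomonotone gradient of modulus μ > 0: for all x, y, ⟨∇f(y), x - y⟩ ≥ 0 implies ⟨∇f(x), x - y⟩ ≥ μ‖x - y‖². If additionally f is convex, then f is strongly pseudoconvex with modulus μ: ⟨∇f(y), x - y⟩ ≥ 0 implies f(x) ≥ f(y) + (μ/2)‖x - y‖². -/

import Mathlib

open scoped RealInnerProductSpace

/-- A differentiable convex function with strongly pseudomonotone gradient is
strongly pseudoconvex with the same modulus. -/
theorem stmt_16 {n : ℕ} (f : EuclideanSpace ℝ (Fin n) → ℝ) (μ : ℝ) (hμ : 0 < μ)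
    (hf : Differentiable ℝ f)
    (hsp : ∀ x z, 0 ≤ fderiv ℝ f z (x - z) → μ * ‖x - z‖ ^ 2 ≤ fderiv ℝ f x (x - z))
    (hconv : ConvexOn ℝ Set.univ f) :
    ∀ x z, 0 ≤ fderiv ℝ f z (x - z) → f z + μ / 2 * ‖x - z‖ ^ 2 ≤ f x := by
  intro x z h0
  set v := x - z with hv
  set g : ℝ → ℝ := fun t => f (z + t • v) with hg
  have hline : ∀ t : ℝ, HasDerivAt (fun s : ℝ => z + s • v) v t := fun t => by
    simpa using ((hasDerivAt_id t).smul_const v).const_add z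
  have hgd : ∀ t : ℝ, HasDerivAt g (fderiv ℝ f (z + t • v) v) t := fun t =>
    ((hf (z + t • v)).hasFDerivAt).comp_hasDerivAt t (hline t)
  have hgconv : ConvexOn ℝ Set.univ g := by
    have := hconv.comp_affineMap (AffineMap.lineMap z x)
    simp only [Set.preimage_univ] at this
    convert this using 1
    · rfl
    · rfl
    · rfl
    · rfl
    funext t
    simp [hg, AffineMap.lineMap_apply, hv]
    rw [add_comm]
  have hmono : MonotoneOn (deriv g) Set.univ :=
    hgconv.monotoneOn_deriv (fun t _ => (hgd t).differentiableAt)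
  have hderiv_eq : ∀ t, deriv g t = fderiv ℝ f (z + t • v) v := fun t => (hgd t).deriv
  have hint : IntervalIntegrable (deriv g) MeasureTheory.volume 0 1 :=
    (hmono.mono (Set.subset_univ _)).intervalIntegrable
  have hftc : ∫ t in (0:ℝ)..1, deriv g t = g 1 - g 0 :=
    intervalIntegral.integral_eq_sub_of_hasDerivAt
      (fun t _ => (hderiv_eq t ▸ hgd t : HasDerivAt g (deriv g t) t)) hint
  have hlow : ∀ t ∈ Set.Icc (0:ℝ) 1, μ * t * ‖v‖ ^ 2 ≤ deriv g t := by
    intro t ht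
    rcases eq_or_lt_of_le ht.1 with rfl | htpos
    · simpa [hderiv_eq] using h0
    · set y := z + t • v with hy
      have hyz : y - z = t • v := by simp [hy]
      have h1 : 0 ≤ fderiv ℝ f z (y - z) := by
        rw [hyz, map_smul]
        exact mul_nonneg htpos.le h0
      have h2 := hsp y z h1
      rw [hyz, map_smul, norm_smul] at h2
      have h2' : μ * (t ^ 2 * ‖v‖ ^ 2) ≤ t * fderiv ℝ f y v := by
        calc μ * (t ^ 2 * ‖v‖ ^ 2) = μ * (‖t‖ * ‖v‖) ^ 2 := by
              rw [Real.norm_eq_abs, abs_of_pos htpos]; ring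
          _ ≤ t * fderiv ℝ f y v := h2
      rw [hderiv_eq]
      have := (mul_le_mul_iff_right₀ htpos).mp (by nlinarith : t * (μ * t * ‖v‖ ^ 2) ≤ t * fderiv ℝ f y v)
      exact this
  have hintc : IntervalIntegrable (fun t => μ * t * ‖v‖ ^ 2) MeasureTheory.volume 0 1 := by
    apply Continuous.intervalIntegrable; continuity
  have hcomp : ∫ t in (0:ℝ)..1, μ * t * ‖v‖ ^ 2 ≤ ∫ t in (0:ℝ)..1, deriv g t :=
    intervalIntegral.integral_mono_on zero_le_one hintc hint hlow
  have hval : ∫ t in (0:ℝ)..1, μ * t * ‖v‖ ^ 2 = μ / 2 * ‖v‖ ^ 2 := by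
    have : (fun t : ℝ => μ * t * ‖v‖ ^ 2) = fun t : ℝ => (μ * ‖v‖ ^ 2) * t := by
      funext t; ring
    rw [this, intervalIntegral.integral_const_mul, integral_id]
    ring
  have hg0 : g 0 = f z := by simp [hg]
  have hg1 : g 1 = f x := by simp [hg, hv]
  rw [hval, hftc, hg0, hg1] at hcomp
  linarith
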